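/- arXiv:2009.14596 — 2 statements merged into one kernel-verified Lean document; each statement's English description precedes it below -/
import Mathlib

section
/- Let f : [0,1]^d → ℝ be in the Barron space, i.e., f(x) = E_{(a,w)∼ρ}[a σ(wᵀx)] for some probability distribution ρ with E_ρ[a²‖w‖₁²] < ∞, where σ is ReLU. Then for every m ∈ ℕ there exist parameters (a_j, w_j), j = 1,…,m, such that the two-layer network f_m(x) = (1/m)∑_j a_j σ(w_jᵀ x) satisfies ‖f − f_m‖_{L²([0,1]^d)} ≤ C ‖f‖_B / √m, where ‖f‖_B = inf_{ρ ∈ P_f} (E_ρ[a²‖w‖₁²])^{1/2} and C is a universal constant. -/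
open MeasureTheory

/-- ReLU activation. -/
noncomputable def relu (z : ℝ) : ℝ := max z 0

/-- `x ∈ [0,1]^d` extended by the constant `1` (bias coordinate). -/
noncomputable def ext {d : ℕ} (x : Fin d → ℝ) : Fin (d + 1) → ℝ :=
  Fin.snoc x 1

/-- Inner product on `ℝ^{d+1}`. -/
noncomputable def dot {d : ℕ} (w v : Fin (d + 1) → ℝ) : ℝ := ∑ i, w i * v i

/-- ℓ¹ norm on `ℝ^{d+1}`. -/
noncomputable def l1 {d : ℕ} (w : Fin (d + 1) → ℝ) : ℝ := ∑ i, |w i|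

/-- The unit cube `[0,1]^d`. -/
def cube (d : ℕ) : Set (Fin d → ℝ) := Set.Icc 0 1

noncomputable def phi {d : ℕ} (p : ℝ × (Fin (d + 1) → ℝ)) (x : Fin d → ℝ) : ℝ :=
  p.1 * relu (dot p.2 (ext x))

lemma l1_nonneg {d : ℕ} (w : Fin (d + 1) → ℝ) : 0 ≤ l1 w :=
  Finset.sum_nonneg fun i _ => abs_nonneg _

lemma continuous_l1 {d : ℕ} : Continuous (l1 (d := d)) :=
  continuous_finset_sum _ fun i _ => (continuous_apply i).abs

lemma continuous_ext {d : ℕ} : Continuous (ext (d := d)) := by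
  refine continuous_pi fun i => ?_
  refine Fin.lastCases ?_ (fun j => ?_) i
  · simp only [ext, Fin.snoc_last]; exact continuous_const
  · simp only [ext, Fin.snoc_castSucc]; exact continuous_apply j

lemma continuous_phi {d : ℕ} :
    Continuous (fun q : (ℝ × (Fin (d + 1) → ℝ)) × (Fin d → ℝ) => phi q.1 q.2) := by
  unfold phi relu dot
  apply Continuous.mul (continuous_fst.fst')
  apply Continuous.max _ continuous_const
  exact continuous_finset_sum _ fun i _ =>
    ((continuous_apply i).comp (continuous_snd.comp continuous_fst)).mul
      ((continuous_apply i).comp (continuous_ext.comp continuous_snd))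

lemma abs_dot_ext_le {d : ℕ} (w : Fin (d + 1) → ℝ) {x : Fin d → ℝ} (hx : x ∈ cube d) :
    |dot w (ext x)| ≤ l1 w := by
  refine (Finset.abs_sum_le_sum_abs _ _).trans (Finset.sum_le_sum fun i _ => ?_)
  rw [abs_mul]
  have h1 : |ext x i| ≤ 1 := by
    refine Fin.lastCases ?_ (fun j => ?_) i
    · simp [ext]
    · simp only [ext, Fin.snoc_castSucc]
      have h0 : (0:ℝ) ≤ x j := by simpa using hx.1 j
      have h1 : x j ≤ 1 := by simpa using hx.2 j
      rw [abs_le]; exact ⟨by linarith, h1⟩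
  calc |w i| * |ext x i| ≤ |w i| * 1 := by
        exact mul_le_mul_of_nonneg_left h1 (abs_nonneg _)
    _ = |w i| := mul_one _

lemma abs_phi_le {d : ℕ} (p : ℝ × (Fin (d + 1) → ℝ)) {x : Fin d → ℝ} (hx : x ∈ cube d) :
    |phi p x| ≤ |p.1| * l1 p.2 := by
  rw [phi, abs_mul]
  refine mul_le_mul_of_nonneg_left ?_ (abs_nonneg _)
  have : |relu (dot p.2 (ext x))| ≤ |dot p.2 (ext x)| := by
    have h1 : (0:ℝ) ≤ max (dot p.2 (ext x)) 0 := le_max_right _ _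
    rw [relu, abs_le]
    exact ⟨by linarith [abs_nonneg (dot p.2 (ext x))], max_le (le_abs_self _) (abs_nonneg _)⟩
  exact this.trans (abs_dot_ext_le p.2 hx)

lemma phi_sq_le {d : ℕ} (p : ℝ × (Fin (d + 1) → ℝ)) {x : Fin d → ℝ} (hx : x ∈ cube d) :
    (phi p x) ^ 2 ≤ p.1 ^ 2 * (l1 p.2) ^ 2 := by
  have h := abs_phi_le p hx
  have := abs_nonneg (phi p x)
  nlinarith [abs_nonneg p.1, l1_nonneg p.2, sq_abs (phi p x), sq_abs p.1]

lemma cube_volume (d : ℕ) : volume (cube d) = 1 := by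
  rw [cube, Real.volume_Icc_pi]
  simp

lemma measurableSet_cube (d : ℕ) : MeasurableSet (cube d) := measurableSet_Icc

instance cube_prob (d : ℕ) : IsProbabilityMeasure (volume.restrict (cube d)) :=
  ⟨by rw [Measure.restrict_apply_univ, cube_volume]⟩

section Rep
variable {d : ℕ} (ρ : Measure (ℝ × (Fin (d + 1) → ℝ))) [IsProbabilityMeasure ρ]

/-- the canonical representative `x ↦ ∫ p, phi p x ∂ρ`. -/
noncomputable def ftil (x : Fin d → ℝ) : ℝ := ∫ p, phi p x ∂ρ

variable (hint : Integrable (fun p => p.1 ^ 2 * (l1 p.2) ^ 2) ρ)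

lemma moment_nonneg : 0 ≤ ∫ p, p.1 ^ 2 * (l1 p.2) ^ 2 ∂ρ :=
  integral_nonneg fun p => mul_nonneg (sq_nonneg _) (sq_nonneg _)

include hint in
lemma int_abs_l1 : Integrable (fun p : ℝ × (Fin (d + 1) → ℝ) => |p.1| * l1 p.2) ρ := by
  refine Integrable.mono' (((integrable_const (1:ℝ)).add hint).div_const 2) ?_ ?_
  · exact ((measurable_fst.abs.mul (continuous_l1.measurable.comp measurable_snd))).aestronglyMeasurable
  · refine Filter.Eventually.of_forall fun p => ?_
    have h1 : (0:ℝ) ≤ |p.1| * l1 p.2 := mul_nonneg (abs_nonneg _) (l1_nonneg _)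
    rw [Real.norm_eq_abs, abs_of_nonneg h1]
    have h2 : (|p.1| * l1 p.2) ^ 2 = p.1 ^ 2 * (l1 p.2) ^ 2 := by
      rw [mul_pow, sq_abs]
    simp only [Pi.add_apply]
    nlinarith [sq_nonneg (|p.1| * l1 p.2 - 1)]

include hint in
lemma int_phi {x : Fin d → ℝ} (hx : x ∈ cube d) : Integrable (fun p => phi p x) ρ := by
  refine Integrable.mono' (int_abs_l1 ρ hint) ?_ ?_
  · exact (continuous_phi.comp (Continuous.prodMk_left x)).aestronglyMeasurable
  · exact Filter.Eventually.of_forall fun p => by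
      rw [Real.norm_eq_abs]; exact abs_phi_le p hx

include hint in
lemma int_phi_sq {x : Fin d → ℝ} (hx : x ∈ cube d) :
    Integrable (fun p => (phi p x) ^ 2) ρ := by
  refine Integrable.mono' hint ?_ ?_
  · exact ((continuous_phi.comp (Continuous.prodMk_left x)).pow 2).aestronglyMeasurable
  · exact Filter.Eventually.of_forall fun p => by
      rw [Real.norm_eq_abs, abs_of_nonneg (sq_nonneg _)]; exact phi_sq_le p hx

include hint in
lemma ftil_bound {x : Fin d → ℝ} (hx : x ∈ cube d) :
    |ftil ρ x| ≤ ∫ p, |p.1| * l1 p.2 ∂ρ := by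
  rw [ftil, ← Real.norm_eq_abs]
  refine (norm_integral_le_integral_norm _).trans ?_
  refine integral_mono ((int_phi ρ hint hx).abs) (int_abs_l1 ρ hint) fun p => ?_
  rw [Real.norm_eq_abs]; exact abs_phi_le p hx

include hint in
lemma sm_ftil : StronglyMeasurable (ftil ρ) := by
  have h : StronglyMeasurable
      (fun q : (ℝ × (Fin (d + 1) → ℝ)) × (Fin d → ℝ) => phi q.1 q.2) :=
    continuous_phi.stronglyMeasurable
  exact h.integral_prod_left'

include hint in
lemma S_le {x : Fin d → ℝ} (hx : x ∈ cube d) :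
    ∫ p, (phi p x) ^ 2 ∂ρ ≤ ∫ p, p.1 ^ 2 * (l1 p.2) ^ 2 ∂ρ :=
  integral_mono (int_phi_sq ρ hint hx) hint fun p => phi_sq_le p hx

end Rep

section Core
variable {d : ℕ} (ρ : Measure (ℝ × (Fin (d + 1) → ℝ))) [IsProbabilityMeasure ρ]
variable (hint : Integrable (fun p => p.1 ^ 2 * (l1 p.2) ^ 2) ρ)

include hint in
lemma core (u : (Fin d → ℝ) → ℝ) (hu : StronglyMeasurable u) (Cu : ℝ)
    (hub : ∀ x ∈ cube d, |u x| ≤ Cu) (t : ℝ) :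
    ∃ p : ℝ × (Fin (d + 1) → ℝ),
      ∫ x in cube d, (u x - t * phi p x) ^ 2 ≤
        (∫ x in cube d, (u x - t * ftil ρ x) ^ 2) +
          t ^ 2 * ∫ p, p.1 ^ 2 * (l1 p.2) ^ 2 ∂ρ := by
  set μ := volume.restrict (cube d) with hμ
  set M2 := ∫ p, p.1 ^ 2 * (l1 p.2) ^ 2 ∂ρ with hM2
  set B := ∫ p, |p.1| * l1 p.2 ∂ρ with hB
  set F : (ℝ × (Fin (d + 1) → ℝ)) → (Fin d → ℝ) → ℝ :=
    fun p x => (u x - t * phi p x) ^ 2 with hF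
  -- measurability of the uncurried integrand
  have hFm : AEStronglyMeasurable (Function.uncurry F) (ρ.prod μ) := by
    refine Measurable.aestronglyMeasurable ?_
    exact ((hu.measurable.comp measurable_snd).sub
      (continuous_phi.measurable.const_mul t)).pow_const 2
  -- a.e. the second coordinate lies in the cube
  have hae : ∀ᵐ q ∂(ρ.prod μ), q.2 ∈ cube d := by
    have heq : ρ.prod μ = (ρ.prod volume).restrict (Set.univ ×ˢ cube d) := by
      rw [hμ, ← Measure.prod_restrict, Measure.restrict_univ]
    rw [heq]
    filter_upwards [ae_restrict_mem (MeasurableSet.univ.prod (measurableSet_cube d))] with q hq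
    exact hq.2
  -- dominating function
  have hg : Integrable (fun p : ℝ × (Fin (d + 1) → ℝ) =>
      2 * Cu ^ 2 + 2 * t ^ 2 * (p.1 ^ 2 * (l1 p.2) ^ 2)) ρ :=
    (integrable_const _).add (hint.const_mul (2 * t ^ 2))
  have hdom : Integrable (fun q : (ℝ × (Fin (d + 1) → ℝ)) × (Fin d → ℝ) =>
      2 * Cu ^ 2 + 2 * t ^ 2 * (q.1.1 ^ 2 * (l1 q.1.2) ^ 2)) (ρ.prod μ) := by
    have hmap : Measure.map Prod.fst (ρ.prod μ) = ρ := by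
      rw [Measure.map_fst_prod]
      simp
    rw [← hmap] at hg
    exact (integrable_map_measure hg.1 measurable_fst.aemeasurable).mp hg
  have hbnd : ∀ᵐ q ∂(ρ.prod μ), ‖Function.uncurry F q‖ ≤
      2 * Cu ^ 2 + 2 * t ^ 2 * (q.1.1 ^ 2 * (l1 q.1.2) ^ 2) := by
    filter_upwards [hae] with q hq
    have h0 : Function.uncurry F q = (u q.2 - t * phi q.1 q.2) ^ 2 := rfl
    rw [h0, Real.norm_eq_abs, abs_of_nonneg (sq_nonneg _)]
    have h1 : (u q.2) ^ 2 ≤ Cu ^ 2 := by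
      have h := hub q.2 hq
      nlinarith [abs_nonneg (u q.2), sq_abs (u q.2)]
    have h2 : (phi q.1 q.2) ^ 2 ≤ q.1.1 ^ 2 * (l1 q.1.2) ^ 2 := phi_sq_le _ hq
    nlinarith [sq_nonneg (u q.2 + t * phi q.1 q.2), sq_nonneg t,
      mul_le_mul_of_nonneg_left h2 (sq_nonneg t)]
  have hFint : Integrable (Function.uncurry F) (ρ.prod μ) := Integrable.mono' hdom hFm hbnd
  -- Fubini
  have hswap : ∫ p, (∫ x, F p x ∂μ) ∂ρ = ∫ x, (∫ p, F p x ∂ρ) ∂μ :=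
    integral_integral_swap hFint
  -- pointwise (in x) bound on the inner integral
  have hinner : ∀ x ∈ cube d, ∫ p, F p x ∂ρ ≤ (u x - t * ftil ρ x) ^ 2 + t ^ 2 * M2 := by
    intro x hx
    have i1 : Integrable (fun p => phi p x) ρ := int_phi ρ hint hx
    have i2 : Integrable (fun p => (phi p x) ^ 2) ρ := int_phi_sq ρ hint hx
    have e1 : (fun p => F p x) = fun p =>
        ((u x) ^ 2 - (2 * t * u x) * phi p x) + t ^ 2 * (phi p x) ^ 2 :=
      funext fun p => by simp only [hF]; ring
    have h1 : Integrable (fun p => u x ^ 2 - 2 * t * u x * phi p x) ρ :=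
      by exact (integrable_const (u x ^ 2)).sub (i1.const_mul (2 * t * u x))
    rw [e1, integral_add h1 (i2.const_mul (t ^ 2)),
      integral_sub (integrable_const ((u x) ^ 2)) (i1.const_mul (2 * t * u x)), integral_const,
      integral_const_mul, integral_const_mul]
    simp only [measure_univ, probReal_univ, ENNReal.toReal_one, smul_eq_mul, one_mul]
    have hS : ∫ p, (phi p x) ^ 2 ∂ρ ≤ M2 := S_le ρ hint hx
    have hft : ∫ p, phi p x ∂ρ = ftil ρ x := rfl
    rw [hft]
    nlinarith [sq_nonneg (ftil ρ x), sq_nonneg t,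
      mul_le_mul_of_nonneg_left hS (sq_nonneg t)]
  -- integrability of both sides in x
  have hInt1 : Integrable (fun x => ∫ p, F p x ∂ρ) μ := hFint.integral_prod_right
  have hsq : Integrable (fun x => (u x - t * ftil ρ x) ^ 2) μ := by
    refine Integrable.mono' (integrable_const ((Cu + |t| * B) ^ 2)) ?_ ?_
    · exact (((hu.measurable.sub ((sm_ftil ρ hint).measurable.const_mul t)).pow_const
        2)).aestronglyMeasurable
    · filter_upwards [ae_restrict_mem (measurableSet_cube d)] with x hx
      rw [Real.norm_eq_abs, abs_of_nonneg (sq_nonneg _)]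
      have h1 : |u x - t * ftil ρ x| ≤ Cu + |t| * B := by
        refine (abs_sub _ _).trans ?_
        have h2 : |t * ftil ρ x| ≤ |t| * B := by
          rw [abs_mul]
          exact mul_le_mul_of_nonneg_left (ftil_bound ρ hint hx) (abs_nonneg t)
        have := hub x hx
        linarith
      calc (u x - t * ftil ρ x) ^ 2 = |u x - t * ftil ρ x| ^ 2 := (sq_abs _).symm
        _ ≤ (Cu + |t| * B) ^ 2 := by
            exact pow_le_pow_left₀ (abs_nonneg _) h1 2
  have hInt2 : Integrable (fun x => (u x - t * ftil ρ x) ^ 2 + t ^ 2 * M2) μ :=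
    hsq.add (integrable_const _)
  have houter : ∫ x, (∫ p, F p x ∂ρ) ∂μ ≤
      ∫ x, ((u x - t * ftil ρ x) ^ 2 + t ^ 2 * M2) ∂μ := by
    refine integral_mono_ae hInt1 hInt2 ?_
    filter_upwards [ae_restrict_mem (measurableSet_cube d)] with x hx using hinner x hx
  have hre : ∫ x, ((u x - t * ftil ρ x) ^ 2 + t ^ 2 * M2) ∂μ =
      (∫ x, (u x - t * ftil ρ x) ^ 2 ∂μ) + t ^ 2 * M2 := by
    rw [integral_add hsq (integrable_const _), integral_const]
    simp [measure_univ]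
  have hgint : Integrable (fun p => ∫ x, F p x ∂μ) ρ := hFint.integral_prod_left
  obtain ⟨p, hp⟩ := exists_le_integral hgint
  refine ⟨p, ?_⟩
  calc ∫ x in cube d, (u x - t * phi p x) ^ 2 = ∫ x, F p x ∂μ := rfl
    _ ≤ ∫ p, (∫ x, F p x ∂μ) ∂ρ := hp
    _ = ∫ x, (∫ p, F p x ∂ρ) ∂μ := hswap
    _ ≤ ∫ x, ((u x - t * ftil ρ x) ^ 2 + t ^ 2 * M2) ∂μ := houter
    _ = (∫ x in cube d, (u x - t * ftil ρ x) ^ 2) + t ^ 2 * M2 := hre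

end Core

section Approx
variable {d : ℕ} (ρ : Measure (ℝ × (Fin (d + 1) → ℝ))) [IsProbabilityMeasure ρ]
variable (hint : Integrable (fun p => p.1 ^ 2 * (l1 p.2) ^ 2) ρ)

include hint in
lemma approxAux (k : ℕ) : ∃ q : Fin (k + 1) → ℝ × (Fin (d + 1) → ℝ),
    ∫ x in cube d, (ftil ρ x - (1 / ((k + 1 : ℕ) : ℝ)) * ∑ j, phi (q j) x) ^ 2 ≤
      (∫ p, p.1 ^ 2 * (l1 p.2) ^ 2 ∂ρ) / ((k + 1 : ℕ) : ℝ) := by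
  induction k with
  | zero =>
    obtain ⟨p, hp⟩ := core ρ hint (ftil ρ) (sm_ftil ρ hint) (∫ p, |p.1| * l1 p.2 ∂ρ)
      (fun x hx => ftil_bound ρ hint hx) 1
    refine ⟨fun _ => p, ?_⟩
    have h2 : ∫ x in cube d, (ftil ρ x - 1 * ftil ρ x) ^ 2 = 0 := by simp
    calc ∫ x in cube d, (ftil ρ x - (1 / ((0 + 1 : ℕ) : ℝ)) * ∑ j, phi p x) ^ 2
        = ∫ x in cube d, (ftil ρ x - 1 * phi p x) ^ 2 := by norm_num [Fin.sum_univ_one]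
      _ ≤ (∫ x in cube d, (ftil ρ x - 1 * ftil ρ x) ^ 2) +
            1 ^ 2 * ∫ p, p.1 ^ 2 * (l1 p.2) ^ 2 ∂ρ := hp
      _ = (∫ p, p.1 ^ 2 * (l1 p.2) ^ 2 ∂ρ) / ((0 + 1 : ℕ) : ℝ) := by rw [h2]; norm_num
  | succ k IH =>
    obtain ⟨q₀, h₀⟩ := IH
    set M2 := ∫ p, p.1 ^ 2 * (l1 p.2) ^ 2 ∂ρ with hM2
    have hM2nn : 0 ≤ M2 := moment_nonneg ρ
    set n : ℝ := ((k + 1 : ℕ) : ℝ) with hn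
    have hn0 : (0 : ℝ) < n := by positivity
    set net : (Fin d → ℝ) → ℝ := fun x => (1 / n) * ∑ j, phi (q₀ j) x with hnet
    set Cnet : ℝ := (1 / n) * ∑ j, |(q₀ j).1| * l1 (q₀ j).2 with hCnet
    have hnetb : ∀ x ∈ cube d, |net x| ≤ Cnet := by
      intro x hx
      rw [hnet, hCnet, abs_mul, abs_of_nonneg (by positivity : (0:ℝ) ≤ 1 / n)]
      refine mul_le_mul_of_nonneg_left ?_ (by positivity)
      exact (Finset.abs_sum_le_sum_abs _ _).trans
        (Finset.sum_le_sum fun j _ => abs_phi_le _ hx)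
    have hnetc : Continuous net :=
      continuous_const.mul (continuous_finset_sum _ fun j _ =>
        continuous_phi.comp (Continuous.prodMk_right (q₀ j)))
    set B := ∫ p, |p.1| * l1 p.2 ∂ρ with hBdef
    set u : (Fin d → ℝ) → ℝ := fun x => ftil ρ x - (n / (n + 1)) * net x with hu
    have hum : StronglyMeasurable u :=
      (sm_ftil ρ hint).sub (hnetc.stronglyMeasurable.const_mul _)
    have hub : ∀ x ∈ cube d, |u x| ≤ B + Cnet := by
      intro x hx
      rw [hu]
      refine (abs_sub _ _).trans ?_
      have h1 := ftil_bound ρ hint hx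
      have hnb := hnetb x hx
      have hCnet0 : 0 ≤ Cnet := le_trans (abs_nonneg _) hnb
      have h2 : |(n / (n + 1)) * net x| ≤ Cnet := by
        rw [abs_mul]
        have hle1 : |n / (n + 1)| ≤ 1 := by
          rw [abs_of_nonneg (by positivity), div_le_one (by positivity)]; linarith
        calc |n / (n + 1)| * |net x| ≤ 1 * Cnet :=
              mul_le_mul hle1 hnb (abs_nonneg _) one_pos.le
          _ = Cnet := one_mul _
      linarith
    obtain ⟨p, hp⟩ := core ρ hint u hum (B + Cnet) hub (1 / (n + 1))
    obtain ⟨qq, hqq⟩ : ∃ qq : Fin (k + 1 + 1) → ℝ × (Fin (d + 1) → ℝ),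
        qq = Fin.snoc q₀ p := ⟨_, rfl⟩
    refine ⟨qq, ?_⟩
    have hsum : ∀ x : Fin d → ℝ, ∑ j : Fin (k + 1 + 1), phi (qq j) x
        = (∑ j : Fin (k + 1), phi (q₀ j) x) + phi p x := by
      intro x
      rw [hqq, Fin.sum_univ_castSucc]
      simp
    have hA : ∀ x, ftil ρ x - (1 / ((k + 1 + 1 : ℕ) : ℝ)) * ∑ j, phi (qq j) x
        = u x - (1 / (n + 1)) * phi p x := by
      intro x
      rw [hsum x, hu, hnet, hn]
      push_cast
      field_simp
      ring
    have hB2 : ∀ x, (u x - (1 / (n + 1)) * ftil ρ x) ^ 2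
        = (n / (n + 1)) ^ 2 * (ftil ρ x - net x) ^ 2 := by
      intro x
      rw [hu]
      field_simp
      ring
    have e1 : ∫ x in cube d,
        (ftil ρ x - (1 / ((k + 1 + 1 : ℕ) : ℝ)) * ∑ j, phi (qq j) x) ^ 2
        = ∫ x in cube d, (u x - (1 / (n + 1)) * phi p x) ^ 2 :=
      integral_congr_ae (Filter.Eventually.of_forall fun x => by dsimp only; rw [hA x])
    have e2 : ∫ x in cube d, (u x - (1 / (n + 1)) * ftil ρ x) ^ 2
        = (n / (n + 1)) ^ 2 * ∫ x in cube d, (ftil ρ x - net x) ^ 2 := by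
      rw [← integral_const_mul]
      exact integral_congr_ae (Filter.Eventually.of_forall fun x => by dsimp only; rw [hB2 x])
    have h₀' : ∫ x in cube d, (ftil ρ x - net x) ^ 2 ≤ M2 / n := h₀
    have hmul : (n / (n + 1)) ^ 2 * ∫ x in cube d, (ftil ρ x - net x) ^ 2
        ≤ (n / (n + 1)) ^ 2 * (M2 / n) := mul_le_mul_of_nonneg_left h₀' (by positivity)
    have hnum : (n / (n + 1)) ^ 2 * (M2 / n) + (1 / (n + 1)) ^ 2 * M2 = M2 / (n + 1) := by
      field_simp
    calc ∫ x in cube d,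
          (ftil ρ x - (1 / ((k + 1 + 1 : ℕ) : ℝ)) * ∑ j, phi (qq j) x) ^ 2
        = ∫ x in cube d, (u x - (1 / (n + 1)) * phi p x) ^ 2 := e1
      _ ≤ (∫ x in cube d, (u x - (1 / (n + 1)) * ftil ρ x) ^ 2) + (1 / (n + 1)) ^ 2 * M2 := hp
      _ = (n / (n + 1)) ^ 2 * (∫ x in cube d, (ftil ρ x - net x) ^ 2)
            + (1 / (n + 1)) ^ 2 * M2 := by rw [e2]
      _ ≤ (n / (n + 1)) ^ 2 * (M2 / n) + (1 / (n + 1)) ^ 2 * M2 := by linarith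
      _ = M2 / (n + 1) := hnum
      _ = M2 / ((k + 1 + 1 : ℕ) : ℝ) := by rw [hn]; push_cast; ring

end Approx

/-- `ρ` is a representing measure for `f` on `[0,1]^d` with finite Barron moment. -/
def RepMeasure {d : ℕ} (f : (Fin d → ℝ) → ℝ) (ρ : Measure (ℝ × (Fin (d + 1) → ℝ))) : Prop :=
  IsProbabilityMeasure ρ ∧
    Integrable (fun p => p.1 ^ 2 * (l1 p.2) ^ 2) ρ ∧
    ∀ x ∈ cube d, f x = ∫ p, p.1 * relu (dot p.2 (ext x)) ∂ρ

/-- The Barron norm `‖f‖_B = inf_{ρ ∈ P_f} (E_ρ[a²‖w‖₁²])^{1/2}`. -/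
noncomputable def barronNorm {d : ℕ} (f : (Fin d → ℝ) → ℝ) : ℝ :=
  sInf { r | ∃ ρ : Measure (ℝ × (Fin (d + 1) → ℝ)), RepMeasure f ρ ∧
    r = Real.sqrt (∫ p, p.1 ^ 2 * (l1 p.2) ^ 2 ∂ρ) }

/-- Direct approximation theorem: a Barron function can be approximated in `L²([0,1]^d)`
by a two-layer ReLU network of width `m` with rate `C‖f‖_B/√m` for a universal constant `C`. -/
theorem direct_approximation_barron :
    ∃ C : ℝ, 0 < C ∧ ∀ (d m : ℕ), 0 < m → ∀ f : (Fin d → ℝ) → ℝ,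
      (∃ ρ : Measure (ℝ × (Fin (d + 1) → ℝ)), RepMeasure f ρ) →
      ∃ (a : Fin m → ℝ) (w : Fin m → (Fin (d + 1) → ℝ)),
        Real.sqrt (∫ x in cube d,
            (f x - (1 / (m : ℝ)) * ∑ j, a j * relu (dot (w j) (ext x))) ^ 2)
          ≤ C * barronNorm f / Real.sqrt m := by
  refine ⟨2, two_pos, ?_⟩
  intro d m hm f hex
  obtain ⟨ρ, hprob, hint, hrep⟩ := hex
  set S := { r | ∃ ρ : Measure (ℝ × (Fin (d + 1) → ℝ)), RepMeasure f ρ ∧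
    r = Real.sqrt (∫ p, p.1 ^ 2 * (l1 p.2) ^ 2 ∂ρ) } with hSdef
  have hbNS : barronNorm f = sInf S := rfl
  have hSne : S.Nonempty := ⟨_, ρ, ⟨hprob, hint, hrep⟩, rfl⟩
  have hSbd : BddBelow S := ⟨0, fun r hr => by
    obtain ⟨ρ', _, hr'⟩ := hr
    rw [hr']; exact Real.sqrt_nonneg _⟩
  have hbN0 : 0 ≤ barronNorm f := by
    rw [hbNS]
    exact le_csInf hSne fun r hr => by
      obtain ⟨ρ', _, hr'⟩ := hr
      rw [hr']; exact Real.sqrt_nonneg _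
  rcases eq_or_lt_of_le hbN0 with hzero | hpos
  · -- Barron norm is zero: f vanishes on the cube
    have hf0 : ∀ x ∈ cube d, f x = 0 := by
      intro x hx
      by_contra hne
      set δ := |f x| with hδ
      have hδ0 : 0 < δ := abs_pos.mpr hne
      have hlt : sInf S < δ := by rw [← hbNS, ← hzero]; exact hδ0
      obtain ⟨r, hrS, hrδ⟩ := exists_lt_of_csInf_lt hSne hlt
      obtain ⟨ρ', hrep', hreq⟩ := hrS
      obtain ⟨hprob', hint', hf'⟩ := hrep'
      haveI := hprob'
      set M2 := ∫ p, p.1 ^ 2 * (l1 p.2) ^ 2 ∂ρ' with hM2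
      have hr0 : 0 ≤ r := hreq ▸ Real.sqrt_nonneg _
      have hM2lt : M2 < δ ^ 2 := by
        have h1 : M2 = r ^ 2 := by
          rw [hreq, Real.sq_sqrt (moment_nonneg ρ')]
        rw [h1]
        exact pow_lt_pow_left₀ hrδ hr0 (by norm_num)
      -- |f x| ≤ (M2 + δ²)/(2δ) < δ
      have hintb : Integrable (fun p : ℝ × (Fin (d + 1) → ℝ) =>
          (p.1 ^ 2 * (l1 p.2) ^ 2 + δ ^ 2) / (2 * δ)) ρ' :=
        (hint'.add (integrable_const _)).div_const _
      have hb1 : |f x| ≤ ∫ p, (p.1 ^ 2 * (l1 p.2) ^ 2 + δ ^ 2) / (2 * δ) ∂ρ' := by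
        rw [hf' x hx, ← Real.norm_eq_abs]
        refine (norm_integral_le_integral_norm _).trans ?_
        refine integral_mono (int_phi ρ' hint' hx).norm hintb fun p => ?_
        have h2 := abs_phi_le p hx
        have h3 : (0:ℝ) ≤ |p.1| * l1 p.2 := mul_nonneg (abs_nonneg _) (l1_nonneg _)
        have h4 : (|p.1| * l1 p.2) ^ 2 = p.1 ^ 2 * (l1 p.2) ^ 2 := by
          rw [mul_pow, sq_abs]
        rw [Real.norm_eq_abs]
        have h5 : |phi p x| ≤ (p.1 ^ 2 * (l1 p.2) ^ 2 + δ ^ 2) / (2 * δ) := by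
          rw [le_div_iff₀ (by positivity)]
          nlinarith [sq_nonneg (|p.1| * l1 p.2 - δ)]
        exact h5
      have hb2 : ∫ p, (p.1 ^ 2 * (l1 p.2) ^ 2 + δ ^ 2) / (2 * δ) ∂ρ'
          = (M2 + δ ^ 2) / (2 * δ) := by
        rw [integral_div, integral_add hint' (integrable_const _), integral_const]
        simp [measure_univ, hM2]
      have : δ < δ := by
        calc δ = |f x| := rfl
          _ ≤ (M2 + δ ^ 2) / (2 * δ) := by rw [← hb2]; exact hb1
          _ < δ := by rw [div_lt_iff₀ (by positivity)]; nlinarith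
      exact lt_irrefl _ this
    refine ⟨fun _ => 0, fun _ => 0, ?_⟩
    have hzero' : ∫ x in cube d,
        (f x - (1 / (m : ℝ)) * ∑ j : Fin m, (0:ℝ) * relu (dot 0 (ext x))) ^ 2 = 0 := by
      rw [setIntegral_congr_fun (measurableSet_cube d)
        (g := fun _ => (0:ℝ)) (fun x hx => by simp [hf0 x hx])]
      simp
    rw [hzero', Real.sqrt_zero, ← hzero]
    positivity
  · -- positive Barron norm: use the Monte-Carlo construction
    have hlt : sInf S < 2 * barronNorm f := by rw [← hbNS]; linarith
    obtain ⟨r, hrS, hrlt⟩ := exists_lt_of_csInf_lt hSne hlt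
    obtain ⟨ρ', hrep', hreq⟩ := hrS
    obtain ⟨hprob', hint', hf'⟩ := hrep'
    haveI := hprob'
    obtain ⟨k, rfl⟩ : ∃ k, m = k + 1 := ⟨m - 1, (Nat.succ_pred_eq_of_pos hm).symm⟩
    obtain ⟨q, hq⟩ := approxAux ρ' hint' k
    refine ⟨fun j => (q j).1, fun j => (q j).2, ?_⟩
    have hcong : ∫ x in cube d, (f x - (1 / ((k + 1 : ℕ) : ℝ)) *
          ∑ j, (q j).1 * relu (dot (q j).2 (ext x))) ^ 2
        = ∫ x in cube d,
            (ftil ρ' x - (1 / ((k + 1 : ℕ) : ℝ)) * ∑ j, phi (q j) x) ^ 2 := by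
      refine setIntegral_congr_fun (measurableSet_cube d) fun x hx => ?_
      rw [hf' x hx]
      rfl
    rw [hcong]
    set M2 := ∫ p, p.1 ^ 2 * (l1 p.2) ^ 2 ∂ρ' with hM2
    have hsq := Real.sqrt_le_sqrt hq
    have hdiv : Real.sqrt (M2 / ((k + 1 : ℕ) : ℝ))
        = Real.sqrt M2 / Real.sqrt ((k + 1 : ℕ) : ℝ) := by
      rw [Real.sqrt_div (moment_nonneg ρ')]
    have hfin : Real.sqrt M2 / Real.sqrt ((k + 1 : ℕ) : ℝ)
        ≤ 2 * barronNorm f / Real.sqrt ((k + 1 : ℕ) : ℝ) := by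
      have hpos' : 0 < Real.sqrt ((k + 1 : ℕ) : ℝ) := by positivity
      have : Real.sqrt M2 ≤ 2 * barronNorm f := by rw [← hreq]; exact hrlt.le
      gcongr
    exact hsq.trans (by rw [hdiv] at *; exact hfin)
end

section
/- Let f(x) = E_{(a,w)∼ρ}[a σ(wᵀx)] with ReLU σ, where E_ρ[a²‖w‖₂²] < ∞. Let (a_j, w_j), j=1,…,m be i.i.d. samples from ρ and f_m(x) = (1/m)∑_j a_j σ(w_jᵀx). Then E[ ‖f − f_m‖²_{L²(μ)} ] ≤ E_ρ[a² ‖w‖₂²] · E_{x∼μ}[‖x‖₂²] / m for any probability measure μ on ℝ^d. -/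
open MeasureTheory

noncomputable def dotd {d : ℕ} (w x : Fin d → ℝ) : ℝ := ∑ i, w i * x i

/-- Squared Euclidean norm on `ℝ^d`. -/
noncomputable def l2sq {d : ℕ} (w : Fin d → ℝ) : ℝ := ∑ i, (w i) ^ 2

open MeasureTheory Finset

section aux
variable {α : Type*} [MeasurableSpace α] (ρ : Measure α) [IsProbabilityMeasure ρ] {m : ℕ}

lemma aux_single (g : α → ℝ) (hg : Integrable g ρ) (j : Fin m) :
    ∫ P : Fin m → α, g (P j) ∂(Measure.pi fun _ : Fin m => ρ) = ∫ p, g p ∂ρ := by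
  letI : MeasureSpace α := ⟨ρ⟩
  haveI : IsProbabilityMeasure (volume : Measure α) := ‹IsProbabilityMeasure ρ›
  have hvol : (Measure.pi fun _ : Fin m => ρ) = (volume : Measure (Fin m → α)) := rfl
  have key : ∀ P : Fin m → α, g (P j) =
      ∏ i, (fun i => if i = j then g else (fun _ => (1:ℝ))) i (P i) := by
    intro P
    simp only []
    rw [Finset.prod_eq_single j (fun i _ hij => by simp [hij]) (by simp)]
    simp
  calc ∫ P : Fin m → α, g (P j) ∂(Measure.pi fun _ : Fin m => ρ)
      = ∫ P : Fin m → α, ∏ i, (fun i => if i = j then g else (fun _ => (1:ℝ))) i (P i) := by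
        rw [hvol]; exact integral_congr_ae (Filter.Eventually.of_forall key)
    _ = ∏ i : Fin m, ∫ p, (fun i => if i = j then g else (fun _ => (1:ℝ))) i p :=
        MeasureTheory.integral_fintype_prod_eq_prod (μ := fun _ => ρ) _
    _ = ∫ p, g p ∂ρ := by
        rw [Finset.prod_eq_single j (fun i _ hij => by simp [hij]) (by simp)]
        simp only [if_pos rfl]
        rfl

lemma aux_int_single (g : α → ℝ) (hg : Integrable g ρ) (j : Fin m) :
    Integrable (fun P : Fin m → α => g (P j)) (Measure.pi fun _ : Fin m => ρ) := by
  letI : MeasureSpace α := ⟨ρ⟩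
  haveI : IsProbabilityMeasure (volume : Measure α) := ‹IsProbabilityMeasure ρ›
  have key : (fun P : Fin m → α => g (P j)) =
      fun P => ∏ i, (fun i => if i = j then g else (fun _ => (1:ℝ))) i (P i) := by
    funext P
    rw [Finset.prod_eq_single j (fun i _ hij => by simp [hij]) (by simp)]
    simp
  rw [key]
  exact Integrable.fintype_prod_dep fun i => by
    by_cases h : i = j
    · simp only [if_pos h]; exact hg
    · simp only [if_neg h]; exact integrable_const 1

lemma aux_mul (g h : α → ℝ) (hg : Integrable g ρ) (hh : Integrable h ρ)
    {j k : Fin m} (hjk : j ≠ k) :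
    ∫ P : Fin m → α, g (P j) * h (P k) ∂(Measure.pi fun _ : Fin m => ρ)
      = (∫ p, g p ∂ρ) * ∫ p, h p ∂ρ := by
  letI : MeasureSpace α := ⟨ρ⟩
  haveI : IsProbabilityMeasure (volume : Measure α) := ‹IsProbabilityMeasure ρ›
  have hvol : (Measure.pi fun _ : Fin m => ρ) = (volume : Measure (Fin m → α)) := rfl
  set F : Fin m → α → ℝ := fun i => if i = j then g else if i = k then h else fun _ => 1 with hF
  have hk' : k ∈ Finset.univ.erase j := Finset.mem_erase.2 ⟨hjk.symm, Finset.mem_univ k⟩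
  have key : ∀ P : Fin m → α, g (P j) * h (P k) = ∏ i, F i (P i) := by
    intro P
    rw [← Finset.mul_prod_erase _ (fun i => F i (P i)) (Finset.mem_univ j),
        ← Finset.mul_prod_erase _ (fun i => F i (P i)) hk']
    have h3 : ∏ i ∈ (Finset.univ.erase j).erase k, F i (P i) = 1 := by
      refine Finset.prod_eq_one fun i hi => ?_
      have h1 := (Finset.mem_erase.1 hi).1
      have h2 := (Finset.mem_erase.1 (Finset.mem_erase.1 hi).2).1
      simp [hF, h1, h2]
    simp only [h3, mul_one]
    simp [hF, h3, hjk.symm]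
  calc ∫ P : Fin m → α, g (P j) * h (P k) ∂(Measure.pi fun _ : Fin m => ρ)
      = ∫ P : Fin m → α, ∏ i, F i (P i) := by
        rw [hvol]; exact integral_congr_ae (Filter.Eventually.of_forall key)
    _ = ∏ i : Fin m, ∫ p, F i p := MeasureTheory.integral_fintype_prod_eq_prod (μ := fun _ => ρ) _
    _ = (∫ p, g p ∂ρ) * ∫ p, h p ∂ρ := by
        rw [← Finset.mul_prod_erase _ (fun i => ∫ p, F i p) (Finset.mem_univ j),
            ← Finset.mul_prod_erase _ (fun i => ∫ p, F i p) hk']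
        have h3 : ∏ i ∈ (Finset.univ.erase j).erase k, ∫ p, F i p = 1 := by
          refine Finset.prod_eq_one fun i hi => ?_
          have h1 := (Finset.mem_erase.1 hi).1
          have h2 := (Finset.mem_erase.1 (Finset.mem_erase.1 hi).2).1
          simp [hF, h1, h2]
        simp only [h3, mul_one]
        simp only [hF, if_pos rfl, if_neg hjk.symm, h3, mul_one]
        rfl

lemma aux_int_mul (g h : α → ℝ) (hg : Integrable g ρ) (hh : Integrable h ρ)
    {j k : Fin m} (hjk : j ≠ k) :
    Integrable (fun P : Fin m → α => g (P j) * h (P k)) (Measure.pi fun _ : Fin m => ρ) := by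
  letI : MeasureSpace α := ⟨ρ⟩
  haveI : IsProbabilityMeasure (volume : Measure α) := ‹IsProbabilityMeasure ρ›
  set F : Fin m → α → ℝ := fun i => if i = j then g else if i = k then h else fun _ => 1 with hF
  have hk' : k ∈ Finset.univ.erase j := Finset.mem_erase.2 ⟨hjk.symm, Finset.mem_univ k⟩
  have key : (fun P : Fin m → α => g (P j) * h (P k)) = fun P => ∏ i, F i (P i) := by
    funext P
    rw [← Finset.mul_prod_erase _ (fun i => F i (P i)) (Finset.mem_univ j),
        ← Finset.mul_prod_erase _ (fun i => F i (P i)) hk']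
    have h3 : ∏ i ∈ (Finset.univ.erase j).erase k, F i (P i) = 1 := by
      refine Finset.prod_eq_one fun i hi => ?_
      have h1 := (Finset.mem_erase.1 hi).1
      have h2 := (Finset.mem_erase.1 (Finset.mem_erase.1 hi).2).1
      simp [hF, h1, h2]
    simp only [h3, mul_one]
    simp [hF, h3, hjk.symm]
  rw [key]
  exact Integrable.fintype_prod_dep fun i => by
    by_cases h1 : i = j
    · simp only [hF, if_pos h1]; exact hg
    · by_cases h2 : i = k
      · simp only [hF, if_neg h1, if_pos h2]; exact hh
      · simp only [hF, if_neg h1, if_neg h2]; exact integrable_const 1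

end aux

/-- Monte Carlo sampling proof of the direct approximation theorem: sampling the parameters
`(a_j,w_j)` i.i.d. from `ρ` gives `E‖f − f_m‖²_{L²(μ)} ≤ E_ρ[a²‖w‖₂²] E_μ[‖x‖₂²]/m` for any
probability measure `μ` on `ℝ^d`. -/
theorem monte_carlo_two_layer_sampling {d : ℕ}
    (ρ : Measure (ℝ × (Fin d → ℝ))) [IsProbabilityMeasure ρ]
    (hmom : Integrable (fun p => p.1 ^ 2 * l2sq p.2) ρ)
    (f : (Fin d → ℝ) → ℝ)
    (hf : ∀ x, f x = ∫ p, p.1 * relu (dotd p.2 x) ∂ρ)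
    (m : ℕ) (hm : 0 < m)
    (μ : Measure (Fin d → ℝ)) [IsProbabilityMeasure μ] :
    ∫⁻ P : Fin m → ℝ × (Fin d → ℝ),
        (∫⁻ x, ENNReal.ofReal
            ((f x - (1 / (m : ℝ)) * ∑ j, (P j).1 * relu (dotd (P j).2 x)) ^ 2) ∂μ)
        ∂(Measure.pi fun _ : Fin m => ρ)
      ≤ (∫⁻ p, ENNReal.ofReal (p.1 ^ 2 * l2sq p.2) ∂ρ)
          * (∫⁻ x, ENNReal.ofReal (l2sq x) ∂μ) / m := by
  classical
  set π := Measure.pi (fun _ : Fin m => ρ) with hπ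
  haveI : IsProbabilityMeasure π := Measure.pi.instIsProbabilityMeasure _
  have hm0 : (m:ℝ) ≠ 0 := Nat.cast_ne_zero.2 hm.ne'
  have hl2nn : ∀ w : Fin d → ℝ, 0 ≤ l2sq w := fun w => Finset.sum_nonneg fun i _ => sq_nonneg _
  have hAnn : 0 ≤ᵐ[ρ] fun p : ℝ × (Fin d → ℝ) => p.1 ^ 2 * l2sq p.2 :=
    Filter.Eventually.of_forall fun p => mul_nonneg (sq_nonneg _) (hl2nn _)
  set A := ∫ p : ℝ × (Fin d → ℝ), p.1 ^ 2 * l2sq p.2 ∂ρ with hA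
  have hA0 : 0 ≤ A := integral_nonneg fun p => mul_nonneg (sq_nonneg _) (hl2nn _)
  have hC : ∫⁻ p : ℝ × (Fin d → ℝ), ENNReal.ofReal (p.1 ^ 2 * l2sq p.2) ∂ρ = ENNReal.ofReal A :=
    (ofReal_integral_eq_lintegral_ofReal hmom hAnn).symm
  have hcont : ∀ x : Fin d → ℝ, Continuous (fun p : ℝ × (Fin d → ℝ) => p.1 * relu (dotd p.2 x)) := by
    intro x
    unfold relu dotd
    exact continuous_fst.mul ((continuous_finset_sum _ fun i _ =>
      ((continuous_apply i).comp continuous_snd).mul continuous_const).max continuous_const)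
  have hfsm : StronglyMeasurable f := by
    have hfe : f = fun x => ∫ p, p.1 * relu (dotd p.2 x) ∂ρ := funext hf
    rw [hfe]
    apply StronglyMeasurable.integral_prod_right
      (f := fun (x : Fin d → ℝ) (p : ℝ × (Fin d → ℝ)) => p.1 * relu (dotd p.2 x))
    have hc : Continuous (fun q : (Fin d → ℝ) × (ℝ × (Fin d → ℝ)) =>
        q.2.1 * relu (dotd q.2.2 q.1)) := by
      unfold relu dotd
      exact (continuous_fst.comp continuous_snd).mul
        ((continuous_finset_sum _ fun i _ =>
          ((continuous_apply i).comp (continuous_snd.comp continuous_snd)).mul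
            ((continuous_apply i).comp continuous_fst)).max continuous_const)
    exact hc.stronglyMeasurable
  -- per-x bound
  have key : ∀ x : Fin d → ℝ,
      ∫⁻ P : Fin m → ℝ × (Fin d → ℝ), ENNReal.ofReal
          ((f x - (1 / (m : ℝ)) * ∑ j, (P j).1 * relu (dotd (P j).2 x)) ^ 2) ∂π
        ≤ ENNReal.ofReal A * ENNReal.ofReal (l2sq x) / m := by
    intro x
    set Y : ℝ × (Fin d → ℝ) → ℝ := fun p => p.1 * relu (dotd p.2 x) with hYdef
    set c := f x with hcdef
    set Z : ℝ × (Fin d → ℝ) → ℝ := fun p => Y p - c with hZdef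
    have hYc : Continuous Y := hcont x
    have hbound : ∀ p : ℝ × (Fin d → ℝ), Y p ^ 2 ≤ p.1 ^ 2 * l2sq p.2 * l2sq x := by
      intro p
      have h1 : relu (dotd p.2 x) ^ 2 ≤ dotd p.2 x ^ 2 := by
        unfold relu
        rcases le_total (dotd p.2 x) 0 with h | h
        · rw [max_eq_right h]; simpa using sq_nonneg _
        · rw [max_eq_left h]
      have h2 : dotd p.2 x ^ 2 ≤ l2sq p.2 * l2sq x :=
        Finset.sum_mul_sq_le_sq_mul_sq _ _ _
      calc Y p ^ 2 = p.1 ^ 2 * relu (dotd p.2 x) ^ 2 := by simp only [hYdef]; ring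
        _ ≤ p.1 ^ 2 * (l2sq p.2 * l2sq x) :=
            mul_le_mul_of_nonneg_left (h1.trans h2) (sq_nonneg _)
        _ = p.1 ^ 2 * l2sq p.2 * l2sq x := by ring
    have hY2 : Integrable (fun p => Y p ^ 2) ρ := by
      refine Integrable.mono' (hmom.mul_const (l2sq x)) ((hYc.pow 2).aestronglyMeasurable) ?_
      exact Filter.Eventually.of_forall fun p => by
        rw [Real.norm_eq_abs, abs_of_nonneg (sq_nonneg _)]; exact hbound p
    have hY1 : Integrable Y ρ :=
      ((memLp_two_iff_integrable_sq hYc.aestronglyMeasurable).2 hY2).integrable one_le_two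
    have hYint : ∫ p, Y p ∂ρ = c := (hf x).symm
    have hZ1 : Integrable Z ρ := hY1.sub (integrable_const c)
    have hZe : (fun p : ℝ × (Fin d → ℝ) => Z p ^ 2)
        = fun p => (Y p ^ 2 - (2 * c) * Y p) + c ^ 2 := by
      funext p; simp only [hZdef]; ring
    have hZ2 : Integrable (fun p => Z p ^ 2) ρ := by
      rw [hZe]; exact (hY2.sub (hY1.const_mul _)).add (integrable_const _)
    have hZ0 : ∫ p, Z p ∂ρ = 0 := by
      simp only [hZdef]
      rw [integral_sub hY1 (integrable_const c), hYint, integral_const, probReal_univ, one_smul, sub_self]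
    have hint : ∀ j k : Fin m,
        Integrable (fun P : Fin m → ℝ × (Fin d → ℝ) => Z (P j) * Z (P k)) π := by
      intro j k
      by_cases hjk : j = k
      · subst hjk
        exact aux_int_single ρ (fun p => Z p * Z p) (by simpa [sq] using hZ2) j
      · exact aux_int_mul ρ Z Z hZ1 hZ1 hjk
    have hval : ∀ j k : Fin m,
        ∫ P, Z (P j) * Z (P k) ∂π = if j = k then ∫ p, Z p ^ 2 ∂ρ else 0 := by
      intro j k
      by_cases hjk : j = k
      · subst hjk; rw [if_pos rfl]
        have h := aux_single ρ (fun p => Z p * Z p) (by simpa [sq] using hZ2) j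
        simpa [sq] using h
      · rw [if_neg hjk, aux_mul ρ Z Z hZ1 hZ1 hjk, hZ0, mul_zero]
    have he : ∀ P : Fin m → ℝ × (Fin d → ℝ),
        (∑ j, Z (P j)) ^ 2 = ∑ j, ∑ k, Z (P j) * Z (P k) := fun P => by
      rw [sq, Finset.sum_mul_sum]
    have hsumint : Integrable (fun P : Fin m → ℝ × (Fin d → ℝ) => (∑ j, Z (P j)) ^ 2) π := by
      have h2 : (fun P : Fin m → ℝ × (Fin d → ℝ) => (∑ j, Z (P j)) ^ 2)
          = fun P => ∑ j, ∑ k, Z (P j) * Z (P k) := funext he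
      rw [h2]
      exact integrable_finset_sum _ fun j _ => integrable_finset_sum _ fun k _ => hint j k
    have hexp : ∫ P, (∑ j, Z (P j)) ^ 2 ∂π = m * ∫ p, Z p ^ 2 ∂ρ := by
      calc ∫ P, (∑ j, Z (P j)) ^ 2 ∂π = ∫ P, ∑ j, ∑ k, Z (P j) * Z (P k) ∂π :=
            integral_congr_ae (Filter.Eventually.of_forall fun P => he P)
        _ = ∑ j, ∫ P, ∑ k, Z (P j) * Z (P k) ∂π :=
            integral_finset_sum _ fun j _ => integrable_finset_sum _ fun k _ => hint j k
        _ = ∑ j, ∑ k, ∫ P, Z (P j) * Z (P k) ∂π :=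
            Finset.sum_congr rfl fun j _ => integral_finset_sum _ fun k _ => hint j k
        _ = ∑ _j : Fin m, ∫ p, Z p ^ 2 ∂ρ := by
            refine Finset.sum_congr rfl fun j _ => ?_
            rw [Finset.sum_congr rfl fun k _ => hval j k]
            simp
        _ = m * ∫ p, Z p ^ 2 ∂ρ := by
            simp [Finset.sum_const, Finset.card_univ, nsmul_eq_mul]
    have hrw : ∀ P : Fin m → ℝ × (Fin d → ℝ),
        (c - (1 / (m : ℝ)) * ∑ j, (P j).1 * relu (dotd (P j).2 x)) ^ 2
          = (1 / (m : ℝ)) ^ 2 * (∑ j, Z (P j)) ^ 2 := by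
      intro P
      have hs : ∑ j, Z (P j) = (∑ j, Y (P j)) - m * c := by
        simp only [hZdef]
        rw [Finset.sum_sub_distrib, Finset.sum_const, Finset.card_univ, Fintype.card_fin,
          nsmul_eq_mul]
      have hYs : ∑ j, (P j).1 * relu (dotd (P j).2 x) = ∑ j, Y (P j) := rfl
      rw [hs, hYs]
      field_simp
      ring
    have htote : (fun P : Fin m → ℝ × (Fin d → ℝ) =>
        (c - (1 / (m : ℝ)) * ∑ j, (P j).1 * relu (dotd (P j).2 x)) ^ 2)
          = fun P => (1 / (m : ℝ)) ^ 2 * (∑ j, Z (P j)) ^ 2 := funext hrw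
    have htotint : Integrable (fun P : Fin m → ℝ × (Fin d → ℝ) =>
        (c - (1 / (m : ℝ)) * ∑ j, (P j).1 * relu (dotd (P j).2 x)) ^ 2) π := by
      rw [htote]; exact hsumint.const_mul _
    have hnn : 0 ≤ᵐ[π] fun P : Fin m → ℝ × (Fin d → ℝ) =>
        (c - (1 / (m : ℝ)) * ∑ j, (P j).1 * relu (dotd (P j).2 x)) ^ 2 :=
      Filter.Eventually.of_forall fun P => sq_nonneg _
    rw [← ofReal_integral_eq_lintegral_ofReal htotint hnn]
    have hZsq_le : ∫ p, Z p ^ 2 ∂ρ ≤ A * l2sq x := by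
      have h2 : ∫ p, Z p ^ 2 ∂ρ ≤ ∫ p, Y p ^ 2 ∂ρ := by
        have h4 : ∫ p, (Y p ^ 2 - Z p ^ 2) ∂ρ = c ^ 2 := by
          have h5 : (fun p : ℝ × (Fin d → ℝ) => Y p ^ 2 - Z p ^ 2)
              = fun p => (2 * c) * Y p - c ^ 2 := by
            funext p; simp only [hZdef]; ring
          rw [h5, integral_sub (hY1.const_mul (2 * c)) (integrable_const _),
            integral_const_mul, hYint, integral_const, probReal_univ,
            one_smul]
          ring
        have h6 : ∫ p, (Y p ^ 2 - Z p ^ 2) ∂ρ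
            = (∫ p, Y p ^ 2 ∂ρ) - ∫ p, Z p ^ 2 ∂ρ := integral_sub hY2 hZ2
        nlinarith [sq_nonneg c]
      have h3 : ∫ p, Y p ^ 2 ∂ρ ≤ ∫ p : ℝ × (Fin d → ℝ), (p.1 ^ 2 * l2sq p.2) * l2sq x ∂ρ :=
        integral_mono hY2 (hmom.mul_const _) hbound
      rw [integral_mul_const] at h3
      exact h2.trans h3
    have hIval : ∫ P, (c - (1 / (m : ℝ)) * ∑ j, (P j).1 * relu (dotd (P j).2 x)) ^ 2 ∂π
        ≤ A * l2sq x / m := by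
      rw [htote, integral_const_mul, hexp]
      have hmpos : (0:ℝ) < m := by positivity
      calc (1 / (m : ℝ)) ^ 2 * ((m : ℝ) * ∫ p, Z p ^ 2 ∂ρ) = (∫ p, Z p ^ 2 ∂ρ) / m := by
            field_simp
        _ ≤ A * l2sq x / m := by gcongr
    calc ENNReal.ofReal (∫ P, (c - (1 / (m : ℝ)) * ∑ j, (P j).1 * relu (dotd (P j).2 x)) ^ 2 ∂π)
        ≤ ENNReal.ofReal (A * l2sq x / m) := ENNReal.ofReal_le_ofReal hIval
      _ = ENNReal.ofReal A * ENNReal.ofReal (l2sq x) / m := by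
          rw [ENNReal.ofReal_div_of_pos (by positivity : (0:ℝ) < (m:ℝ)),
            ENNReal.ofReal_mul hA0, ENNReal.ofReal_natCast]
  -- measurability for Tonelli
  have hmeas : Measurable (Function.uncurry fun (P : Fin m → ℝ × (Fin d → ℝ)) (x : Fin d → ℝ) =>
      ENNReal.ofReal ((f x - (1 / (m : ℝ)) * ∑ j, (P j).1 * relu (dotd (P j).2 x)) ^ 2)) := by
    apply Measurable.ennreal_ofReal
    apply Measurable.pow_const
    apply Measurable.sub
    · exact hfsm.measurable.comp measurable_snd
    · apply Measurable.const_mul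
      apply Finset.measurable_sum
      intro j _
      have hc : Continuous (fun q : (Fin m → ℝ × (Fin d → ℝ)) × (Fin d → ℝ) =>
          (q.1 j).1 * relu (dotd (q.1 j).2 q.2)) := by
        unfold relu dotd
        exact (continuous_fst.comp ((continuous_apply j).comp continuous_fst)).mul
          ((continuous_finset_sum _ fun i _ =>
            ((continuous_apply i).comp (continuous_snd.comp
              ((continuous_apply j).comp continuous_fst))).mul
              ((continuous_apply i).comp continuous_snd)).max continuous_const)
      exact hc.measurable
  rw [lintegral_lintegral_swap hmeas.aemeasurable]
  refine le_trans (lintegral_mono fun x => key x) ?_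
  rw [hC]
  have hgm : Measurable fun x : Fin d → ℝ => ENNReal.ofReal (l2sq x) := by
    apply Measurable.ennreal_ofReal
    unfold l2sq
    exact (continuous_finset_sum _ fun i _ => (continuous_apply i).pow 2).measurable
  calc ∫⁻ x, ENNReal.ofReal A * ENNReal.ofReal (l2sq x) / m ∂μ
      = ∫⁻ x, (ENNReal.ofReal A / m) * ENNReal.ofReal (l2sq x) ∂μ := by
        congr 1; funext x
        rw [div_eq_mul_inv, div_eq_mul_inv, mul_right_comm]
    _ = (ENNReal.ofReal A / m) * ∫⁻ x, ENNReal.ofReal (l2sq x) ∂μ :=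
        lintegral_const_mul _ hgm
    _ = ENNReal.ofReal A * (∫⁻ x, ENNReal.ofReal (l2sq x) ∂μ) / m := by
        rw [div_eq_mul_inv, div_eq_mul_inv, mul_right_comm]
    _ ≤ ENNReal.ofReal A * (∫⁻ x, ENNReal.ofReal (l2sq x) ∂μ) / m := le_rfl
end
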